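/- Let d ≥ 1 be an integer and 0 < p_i ≤ u_i < ∞ for i = 1, 2, with p1 < p2 and p2/u2 > p1/u1. Then there exists a constant c with 0 < c ≤ 1, independent of j, such that for all j ∈ ℕ₀: c · 2^{jd(1/u2 − p1/(u1·p2))} ≤ ‖id_j : m^{2^{jd}}_{u1,p1} → m^{2^{jd}}_{u2,p2}‖ ≤ 2^{jd(1/u2 − p1/(u1·p2))}. -/

import Mathlib

open scoped ENNReal NNReal

noncomputable section

/-- `Q_{j,m} ⊆ Q = [0,1)^d` iff `0 ≤ m i < 2^j` for every coordinate `i`. -/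
def inUnitCube (d j : ℕ) (m : Fin d → ℤ) : Prop :=
  ∀ i, 0 ≤ m i ∧ m i < 2 ^ j

/-- For `ν ≤ j`: `Q_{j,m} ⊆ Q_{ν,k}`. -/
def cubeSub (d j ν : ℕ) (m k : Fin d → ℤ) : Prop :=
  ∀ i, k i * 2 ^ (j - ν) ≤ m i ∧ m i < (k i + 1) * 2 ^ (j - ν)

/-- The finite-dimensional Morrey quasi-norm `‖· | m^{2^{jd}}_{u,p}‖` (`ℝ≥0∞`-valued),
on coefficients indexed by the `m ∈ ℤ^d` with `Q_{j,m} ⊆ Q` (other coordinates are ignored). -/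
def mNorm (d : ℕ) (u p : ℝ) (j : ℕ) (lam : (Fin d → ℤ) → ℂ) : ℝ≥0∞ :=
  ⨆ νk : {νk : ℕ × (Fin d → ℤ) // νk.1 ≤ j ∧ inUnitCube d νk.1 νk.2},
    (2 : ℝ≥0∞) ^ ((d : ℝ) * ((j : ℝ) - (νk.1.1 : ℝ)) * (1 / u - 1 / p)) *
      (∑' m : {m : Fin d → ℤ // cubeSub d j νk.1.1 m νk.1.2},
        ((‖lam m.1‖₊ : ℝ≥0∞)) ^ p) ^ (1 / p)

/-- The `ℓ_q^{2^{jd}}` quasi-norm (`0 < q < ∞`) on level-`j` coefficients. -/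
def lqNorm (d : ℕ) (q : ℝ) (j : ℕ) (lam : (Fin d → ℤ) → ℂ) : ℝ≥0∞ :=
  (∑' m : {m : Fin d → ℤ // inUnitCube d j m}, ((‖lam m.1‖₊ : ℝ≥0∞)) ^ q) ^ (1 / q)

/-- The quasi-norm of the sequence space `ñ^σ_{u,p,q}(Q)`, `q ∈ (0,∞]`. -/
def nNorm (d : ℕ) (σ u p : ℝ) (q : ℝ≥0∞) (lam : ℕ → (Fin d → ℤ) → ℂ) : ℝ≥0∞ :=
  if q = ∞ then
    ⨆ j : ℕ, (2 : ℝ≥0∞) ^ ((j : ℝ) * (σ - d / u)) * mNorm d u p j (lam j)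
  else
    (∑' j : ℕ, ((2 : ℝ≥0∞) ^ ((j : ℝ) * (σ - d / u)) * mNorm d u p j (lam j)) ^ q.toReal) ^
      (1 / q.toReal)

/-- `k`-th entropy number of the identity map between two quasi-norms on one ambient group:
the infimum of all `ε > 0` such that the `N₁`-unit ball is covered by `2^(k-1)` `N₂`-balls of
radius `ε`. -/
def entropyNumber {Λ : Type*} [AddCommGroup Λ] (N₁ N₂ : Λ → ℝ≥0∞) (k : ℕ) : ℝ≥0∞ :=
  sInf {ε : ℝ≥0∞ | 0 < ε ∧ ∃ c : Fin (2 ^ (k - 1)) → Λ,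
    ∀ x : Λ, N₁ x ≤ 1 → ∃ i, N₂ (x - c i) ≤ ε}

/-- Operator quasi-norm of the identity map between two quasi-norms on one ambient space:
the smallest `C` with `N₂ x ≤ C · N₁ x` for all `x`. -/
def opNorm {Λ : Type*} (N₁ N₂ : Λ → ℝ≥0∞) : ℝ≥0∞ :=
  sInf {C : ℝ≥0∞ | ∀ x, N₂ x ≤ C * N₁ x}

end

noncomputable section Aux

open Finset

/-- Grid point in the box. -/
private def boxPt (d n : ℕ) (k : Fin d → ℤ) (t : Fin d → Fin (2 ^ n)) : Fin d → ℤ :=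
  fun i => k i * 2 ^ n + (t i : ℤ)

private def boxEquiv (d n : ℕ) (k : Fin d → ℤ) :
    (Fin d → Fin (2 ^ n)) ≃
      {m : Fin d → ℤ // ∀ i, k i * 2 ^ n ≤ m i ∧ m i < (k i + 1) * 2 ^ n} where
  toFun t := ⟨boxPt d n k t, fun i => by
    have h1 : (0 : ℤ) ≤ (t i : ℤ) := Int.ofNat_nonneg _
    have h2 : ((t i : ℤ)) < 2 ^ n := by exact_mod_cast (t i).isLt
    constructor
    · simp [boxPt]
    · simp only [boxPt]; nlinarith [h2]⟩
  invFun m i := ⟨(m.1 i - k i * 2 ^ n).toNat, by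
    have h := m.2 i
    have h2 : (k i + 1) * 2 ^ n = k i * 2 ^ n + 2 ^ n := by ring
    have h3 : ((2 ^ n : ℕ) : ℤ) = 2 ^ n := by push_cast; ring
    omega⟩
  left_inv t := by
    funext i
    apply Fin.ext
    simp [boxPt]
  right_inv m := by
    apply Subtype.ext
    funext i
    simp only [boxPt]
    have := (m.2 i).1
    omega

private lemma boxSum (d n : ℕ) (k : Fin d → ℤ) (f : (Fin d → ℤ) → ℝ≥0∞) :
    (∑' m : {m : Fin d → ℤ // ∀ i, k i * 2 ^ n ≤ m i ∧ m i < (k i + 1) * 2 ^ n}, f m.1)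
      = ∑ t : Fin d → Fin (2 ^ n), f (boxPt d n k t) := by
  rw [← (boxEquiv d n k).tsum_eq (fun m => f m.1), tsum_fintype]
  rfl

private lemma card_filter_dvd (D M : ℕ) (hD : 0 < D) :
    ((Finset.range (M * D)).filter (fun x => D ∣ x)).card = M := by
  have key : ((Finset.range (M * D)).filter (fun x => D ∣ x)).card = (Finset.range M).card := by
    apply Finset.card_bij' (fun x _ => x / D) (fun q _ => q * D)
    · intro x hx
      simp only [Finset.mem_filter, Finset.mem_range] at hx ⊢
      exact Nat.div_lt_of_lt_mul (by rw [mul_comm]; exact hx.1)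
    · intro q hq
      simp only [Finset.mem_range] at hq
      simp only [Finset.mem_filter, Finset.mem_range]
      exact ⟨(Nat.mul_lt_mul_right hD).2 hq, Dvd.intro_left q rfl⟩
    · intro x hx
      simp only [Finset.mem_filter] at hx
      exact Nat.div_mul_cancel hx.2
    · intro q hq
      exact Nat.mul_div_cancel q hD
  rw [key, Finset.card_range]

/-- exact count of multiples of `2^a` in a dyadic block, `a ≤ n`. -/
private lemma count_eq (n a : ℕ) (h : a ≤ n) (K : ℤ) :
    (∑ x : Fin (2 ^ n), if (2 ^ a : ℤ) ∣ (K * 2 ^ n + (x : ℤ)) then (1 : ℝ≥0∞) else 0)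
      = (2 : ℝ≥0∞) ^ (n - a : ℕ) := by
  classical
  have hdvd : (2 ^ a : ℤ) ∣ K * 2 ^ n := Dvd.dvd.mul_left (pow_dvd_pow 2 h) K
  have key : ∀ x : Fin (2 ^ n),
      ((2 ^ a : ℤ) ∣ (K * 2 ^ n + (x : ℤ))) ↔ (2 ^ a ∣ (x : ℕ)) := by
    intro x
    rw [dvd_add_right hdvd]
    constructor
    · intro hx; exact_mod_cast hx
    · intro hx; exact_mod_cast hx
  simp only [key]
  have : (∑ x : Fin (2 ^ n), if 2 ^ a ∣ (x : ℕ) then (1 : ℝ≥0∞) else 0)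
      = ∑ x ∈ Finset.range (2 ^ n), if 2 ^ a ∣ x then (1 : ℝ≥0∞) else 0 :=
    Fin.sum_univ_eq_sum_range (fun x => if 2 ^ a ∣ x then (1 : ℝ≥0∞) else 0) (2 ^ n)
  rw [this, Finset.sum_boole]
  have h2 : (2 : ℕ) ^ n = 2 ^ (n - a) * 2 ^ a := by
    rw [← pow_add]; congr 1; omega
  rw [h2, card_filter_dvd (2 ^ a) (2 ^ (n - a)) (by positivity)]
  simp

/-- in all cases the count is at most `2^(n-a)`. -/
private lemma count_le (n a : ℕ) (K : ℤ) :
    (∑ x : Fin (2 ^ n), if (2 ^ a : ℤ) ∣ (K * 2 ^ n + (x : ℤ)) then (1 : ℝ≥0∞) else 0)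
      ≤ (2 : ℝ≥0∞) ^ (n - a : ℕ) := by
  classical
  rcases le_or_gt a n with h | h
  · exact (count_eq n a h K).le
  · have hn : n - a = 0 := by omega
    rw [hn, pow_zero]
    rw [Finset.sum_boole]
    have hcard : (Finset.univ.filter
        (fun x : Fin (2 ^ n) => (2 ^ a : ℤ) ∣ (K * 2 ^ n + (x : ℤ)))).card ≤ 1 := by
      apply Finset.card_le_one.2
      intro x hx y hy
      simp only [Finset.mem_filter] at hx hy
      have hxy : (2 ^ a : ℤ) ∣ ((x : ℤ) - (y : ℤ)) := by
        have := dvd_sub hx.2 hy.2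
        simpa using this
      have hx2 : ((x : ℕ) : ℤ) < 2 ^ n := by exact_mod_cast x.isLt
      have hy2 : ((y : ℕ) : ℤ) < 2 ^ n := by exact_mod_cast y.isLt
      have hlt : |(x : ℤ) - (y : ℤ)| < 2 ^ a := by
        have h2 : (2 : ℤ) ^ n < 2 ^ a := by
          exact_mod_cast Nat.pow_lt_pow_right (le_refl 2) h
        rw [abs_lt]
        constructor <;> nlinarith [Int.ofNat_nonneg (x : ℕ), Int.ofNat_nonneg (y : ℕ)]
      have := Int.eq_zero_of_abs_lt_dvd hxy hlt
      apply Fin.ext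
      omega
    exact_mod_cast Nat.cast_le.2 hcard



open Classical in
/-- The extremal sequence: indicator of grid points with spacing `2^a` inside the unit cube. -/
private def lamA (d j a : ℕ) : (Fin d → ℤ) → ℂ :=
  fun m => if (∀ i, 0 ≤ m i ∧ m i < 2 ^ j) ∧ (∀ i, (2 ^ a : ℤ) ∣ m i) then 1 else 0

private lemma lamA_rpow (d j a : ℕ) (p : ℝ) (hp : 0 < p) (m : Fin d → ℤ) :
    ((‖lamA d j a m‖₊ : ℝ≥0∞)) ^ p
      = if (∀ i, 0 ≤ m i ∧ m i < 2 ^ j) ∧ (∀ i, (2 ^ a : ℤ) ∣ m i) then 1 else 0 := by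
  classical
  unfold lamA
  split_ifs with h <;> simp [ENNReal.zero_rpow_of_pos hp]

private lemma ite_forall_prod {d : ℕ} (P : Fin d → Prop) [DecidablePred P] :
    (if (∀ i, P i) then (1 : ℝ≥0∞) else 0) = ∏ i, if P i then (1 : ℝ≥0∞) else 0 := by
  split_ifs with h
  · rw [Finset.prod_eq_one]
    intro i _
    simp [h i]
  · push_neg at h
    obtain ⟨i, hi⟩ := h
    rw [Finset.prod_eq_zero (Finset.mem_univ i)]
    simp [hi]

private lemma boxPt_unitCube {d j ν : ℕ} {k : Fin d → ℤ} (hν : ν ≤ j)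
    (hk : inUnitCube d ν k) (t : Fin d → Fin (2 ^ (j - ν))) :
    ∀ i, 0 ≤ boxPt d (j - ν) k t i ∧ boxPt d (j - ν) k t i < 2 ^ j := by
  intro i
  obtain ⟨hk1, hk2⟩ := hk i
  have ht1 : (0 : ℤ) ≤ (t i : ℤ) := Int.ofNat_nonneg _
  have ht2 : ((t i : ℤ)) < 2 ^ (j - ν) := by exact_mod_cast (t i).isLt
  have hpow : (2 : ℤ) ^ ν * 2 ^ (j - ν) = 2 ^ j := by
    rw [← pow_add]; congr 1; omega
  have hpos : (0 : ℤ) < 2 ^ (j - ν) := by positivity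
  have hk2' : k i + 1 ≤ 2 ^ ν := hk2
  constructor
  · simp only [boxPt]; positivity
  · simp only [boxPt]
    nlinarith [mul_le_mul_of_nonneg_right hk2' hpos.le]

/-- The key sum computation for `lamA`. -/
private lemma lamA_sum (d j ν a : ℕ) (p : ℝ) (hp : 0 < p) (k : Fin d → ℤ)
    (hν : ν ≤ j) (hk : inUnitCube d ν k) :
    (∑' m : {m : Fin d → ℤ // cubeSub d j ν m k}, ((‖lamA d j a m.1‖₊ : ℝ≥0∞)) ^ p)
      = ∏ i : Fin d, ∑ x : Fin (2 ^ (j - ν)),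
          if (2 ^ a : ℤ) ∣ (k i * 2 ^ (j - ν) + (x : ℤ)) then (1 : ℝ≥0∞) else 0 := by
  classical
  have h1 : (∑' m : {m : Fin d → ℤ // cubeSub d j ν m k},
      ((‖lamA d j a m.1‖₊ : ℝ≥0∞)) ^ p)
      = ∑ t : Fin d → Fin (2 ^ (j - ν)), ((‖lamA d j a (boxPt d (j - ν) k t)‖₊ : ℝ≥0∞)) ^ p :=
    boxSum d (j - ν) k (fun m => ((‖lamA d j a m‖₊ : ℝ≥0∞)) ^ p)
  rw [h1]
  have h2 : ∀ t : Fin d → Fin (2 ^ (j - ν)),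
      ((‖lamA d j a (boxPt d (j - ν) k t)‖₊ : ℝ≥0∞)) ^ p
        = ∏ i : Fin d, if (2 ^ a : ℤ) ∣ (k i * 2 ^ (j - ν) + (t i : ℤ)) then (1 : ℝ≥0∞) else 0 := by
    intro t
    rw [lamA_rpow d j a p hp, if_congr (iff_of_eq (by
        simp only [eq_iff_iff]
        constructor
        · rintro ⟨-, h⟩; exact h
        · intro h; exact ⟨boxPt_unitCube hν hk t, h⟩)) rfl rfl]
    exact ite_forall_prod (fun i => (2 ^ a : ℤ) ∣ (k i * 2 ^ (j - ν) + (t i : ℤ)))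
  simp only [h2]
  exact (Fintype.prod_sum (κ := fun _ : Fin d => Fin (2 ^ (j - ν))) fun i x => if (2 ^ a : ℤ) ∣ (k i * 2 ^ (j - ν) + (x : ℤ))
    then (1 : ℝ≥0∞) else 0).symm

private lemma cubeSub_unitCube {d j ν : ℕ} {k : Fin d → ℤ} (hν : ν ≤ j)
    (hk : inUnitCube d ν k) {m : Fin d → ℤ} (hm : cubeSub d j ν m k) : inUnitCube d j m := by
  intro i
  obtain ⟨h1, h2⟩ := hm i
  obtain ⟨hk1, hk2⟩ := hk i
  have hpow : (2 : ℤ) ^ ν * 2 ^ (j - ν) = 2 ^ j := by rw [← pow_add]; congr 1; omega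
  have hpos : (0 : ℤ) < 2 ^ (j - ν) := by positivity
  constructor
  · nlinarith [mul_nonneg hk1 hpos.le]
  · nlinarith [mul_le_mul_of_nonneg_right (by linarith : k i + 1 ≤ (2 : ℤ) ^ ν) hpos.le]

private lemma coeff_le_mNorm (d j : ℕ) (u p : ℝ) (hp : 0 < p) (lam : (Fin d → ℤ) → ℂ)
    (m : Fin d → ℤ) (hm : inUnitCube d j m) : ((‖lam m‖₊ : ℝ≥0∞)) ≤ mNorm d u p j lam := by
  rw [mNorm]
  refine le_trans ?_ (le_iSup _ (⟨(j, m), le_refl j, hm⟩ :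
    {νk : ℕ × (Fin d → ℤ) // νk.1 ≤ j ∧ inUnitCube d νk.1 νk.2}))
  simp only
  have hmem : cubeSub d j j m m := by
    intro i
    simp [Nat.sub_self]
  have hsingle : (∑' m' : {m' : Fin d → ℤ // cubeSub d j j m' m},
      ((‖lam m'.1‖₊ : ℝ≥0∞)) ^ p) = ((‖lam m‖₊ : ℝ≥0∞)) ^ p := by
    rw [tsum_eq_single (⟨m, hmem⟩ : {m' : Fin d → ℤ // cubeSub d j j m' m})]
    intro b' hb'
    exfalso
    apply hb'
    apply Subtype.ext
    funext i
    have h := b'.2 i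
    simp [Nat.sub_self] at h
    show b'.1 i = m i
    omega
  rw [hsingle, ← ENNReal.rpow_mul, mul_one_div_cancel hp.ne', ENNReal.rpow_one]
  have hz : (d : ℝ) * ((j : ℝ) - (j : ℝ)) * (1 / u - 1 / p) = 0 := by ring
  rw [hz, ENNReal.rpow_zero, one_mul]

private lemma mNorm_lamA_le_one (d j a : ℕ) (u p : ℝ) (hp : 0 < p) (hpu : p ≤ u)
    (ha : (j : ℝ) * (p / u) ≤ a) :
    mNorm d u p j (lamA d j a) ≤ 1 := by
  have hu : 0 < u := lt_of_lt_of_le hp hpu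
  rw [mNorm]
  apply iSup_le
  rintro ⟨⟨ν, k⟩, hν, hk⟩
  simp only
  rw [lamA_sum d j ν a p hp k hν hk]
  set n := j - ν with hn
  have hprod : (∏ i : Fin d, ∑ x : Fin (2 ^ n),
      if (2 ^ a : ℤ) ∣ (k i * 2 ^ n + (x : ℤ)) then (1 : ℝ≥0∞) else 0)
      ≤ (2 : ℝ≥0∞) ^ ((((n - a) * d : ℕ)) : ℝ) := by
    calc (∏ i : Fin d, ∑ x : Fin (2 ^ n),
        if (2 ^ a : ℤ) ∣ (k i * 2 ^ n + (x : ℤ)) then (1 : ℝ≥0∞) else 0)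
        ≤ ∏ _i : Fin d, (2 : ℝ≥0∞) ^ (n - a : ℕ) :=
          Finset.prod_le_prod' (fun i _ => count_le n a (k i))
      _ = (2 : ℝ≥0∞) ^ ((n - a) * d : ℕ) := by
          rw [Finset.prod_const, Finset.card_univ, Fintype.card_fin, ← pow_mul]
      _ = (2 : ℝ≥0∞) ^ ((((n - a) * d : ℕ)) : ℝ) := (ENNReal.rpow_natCast 2 _).symm
  have step1 : (∏ i : Fin d, ∑ x : Fin (2 ^ n),
      if (2 ^ a : ℤ) ∣ (k i * 2 ^ n + (x : ℤ)) then (1 : ℝ≥0∞) else 0) ^ (1 / p)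
      ≤ (2 : ℝ≥0∞) ^ (((((n - a) * d : ℕ)) : ℝ) * (1 / p)) := by
    rw [ENNReal.rpow_mul]
    exact ENNReal.rpow_le_rpow hprod (by positivity)
  refine le_trans (mul_le_mul_right step1 _) ?_
  rw [← ENNReal.rpow_add _ _ (by norm_num) (by norm_num)]
  have hjν : (j : ℝ) - (ν : ℝ) = ((n : ℕ) : ℝ) := by
    rw [hn, Nat.cast_sub hν]
  have hnj : ((n : ℕ) : ℝ) ≤ (j : ℝ) := by
    rw [hn]
    exact_mod_cast Nat.sub_le j ν
  have hcast : ((n - a : ℕ) : ℝ) ≤ ((n : ℕ) : ℝ) * (1 - p / u) := by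
    rcases le_or_gt a n with h | h
    · rw [Nat.cast_sub h]
      have h1 : ((n : ℕ) : ℝ) * (p / u) ≤ ((j : ℝ)) * (p / u) := by
        apply mul_le_mul_of_nonneg_right hnj (by positivity)
      have h2 : ((n : ℕ) : ℝ) * (p / u) ≤ (a : ℝ) := le_trans h1 ha
      nlinarith
    · have : n - a = 0 := by omega
      rw [this]
      have hpu1 : p / u ≤ 1 := (div_le_one hu).2 hpu
      have : (0 : ℝ) ≤ ((n : ℕ) : ℝ) * (1 - p / u) := by
        apply mul_nonneg (Nat.cast_nonneg n)
        linarith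
      simpa using this
  have hX : (((n - a) * d : ℕ) : ℝ) ≤ (((n : ℕ) : ℝ) * (1 - p / u)) * (d : ℝ) := by
    push_cast
    exact mul_le_mul_of_nonneg_right hcast (Nat.cast_nonneg d)
  have h0 : (d : ℝ) * ((n : ℕ) : ℝ) * (1 / u - 1 / p)
      + ((((n : ℕ) : ℝ) * (1 - p / u)) * (d : ℝ)) * (1 / p) = 0 := by
    field_simp
    ring
  have hexp : (d : ℝ) * ((j : ℝ) - (ν : ℝ)) * (1 / u - 1 / p)
      + ((((n - a) * d : ℕ)) : ℝ) * (1 / p) ≤ 0 := by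
    rw [hjν]
    nlinarith [mul_le_mul_of_nonneg_right hX (by positivity : (0 : ℝ) ≤ 1 / p)]
  calc (2 : ℝ≥0∞) ^ ((d : ℝ) * ((j : ℝ) - (ν : ℝ)) * (1 / u - 1 / p)
        + ((((n - a) * d : ℕ)) : ℝ) * (1 / p))
      ≤ (2 : ℝ≥0∞) ^ (0 : ℝ) := ENNReal.rpow_le_rpow_of_exponent_le one_le_two hexp
    _ = 1 := ENNReal.rpow_zero

private lemma le_mNorm_lamA (d j a : ℕ) (u p : ℝ) (hp : 0 < p) (ha : a ≤ j) :
    (2 : ℝ≥0∞) ^ ((d : ℝ) * ((j : ℝ) - ((0 : ℕ) : ℝ)) * (1 / u - 1 / p)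
        + ((((j - a) * d : ℕ)) : ℝ) * (1 / p))
      ≤ mNorm d u p j (lamA d j a) := by
  rw [mNorm]
  have hcube : inUnitCube d 0 (fun _ => 0) := by
    intro i
    norm_num
  refine le_trans ?_ (le_iSup _ (⟨(0, fun _ => 0), Nat.zero_le j, hcube⟩ :
    {νk : ℕ × (Fin d → ℤ) // νk.1 ≤ j ∧ inUnitCube d νk.1 νk.2}))
  simp only
  rw [lamA_sum d j 0 a p hp _ (Nat.zero_le j) hcube]
  have hc : ∀ i : Fin d, (∑ x : Fin (2 ^ (j - 0)),
      if (2 ^ a : ℤ) ∣ ((0 : ℤ) * 2 ^ (j - 0) + (x : ℤ)) then (1 : ℝ≥0∞) else 0)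
      = (2 : ℝ≥0∞) ^ (j - 0 - a : ℕ) := fun i => count_eq (j - 0) a (by omega) 0
  rw [Finset.prod_congr rfl (fun i _ => hc i), Finset.prod_const, Finset.card_univ,
    Fintype.card_fin, ← pow_mul]
  rw [← ENNReal.rpow_natCast 2 ((j - 0 - a) * d), ← ENNReal.rpow_mul,
    ← ENNReal.rpow_add _ _ (by norm_num) (by norm_num)]
  apply le_of_eq
  simp only [Nat.sub_zero]

private lemma gamma_pos {u1 p1 u2 p2 : ℝ} (hp1 : 0 < p1) (hp1u1 : p1 ≤ u1)
    (hp2 : 0 < p2) (hp2u2 : p2 ≤ u2) (h2 : p1 / u1 < p2 / u2) :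
    0 < 1 / u2 - p1 / (u1 * p2) := by
  have hu1 : 0 < u1 := lt_of_lt_of_le hp1 hp1u1
  have hu2 : 0 < u2 := lt_of_lt_of_le hp2 hp2u2
  have hcross : p1 * u2 < p2 * u1 := (div_lt_div_iff₀ hu1 hu2).1 h2
  rw [sub_pos, div_lt_div_iff₀ (by positivity) hu2]
  nlinarith

private lemma mNorm_le_mNorm (d j : ℕ) (u1 p1 u2 p2 : ℝ)
    (hp1 : 0 < p1) (hp1u1 : p1 ≤ u1) (hp2 : 0 < p2) (hp2u2 : p2 ≤ u2) (h1 : p1 < p2)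
    (h2 : p1 / u1 < p2 / u2) (lam : (Fin d → ℤ) → ℂ) :
    mNorm d u2 p2 j lam ≤
      (2 : ℝ≥0∞) ^ (((j : ℝ) * d) * (1 / u2 - p1 / (u1 * p2))) * mNorm d u1 p1 j lam := by
  have hu1 : 0 < u1 := lt_of_lt_of_le hp1 hp1u1
  have hu2 : 0 < u2 := lt_of_lt_of_le hp2 hp2u2
  have hγ : 0 < 1 / u2 - p1 / (u1 * p2) := gamma_pos hp1 hp1u1 hp2 hp2u2 h2
  set N1 := mNorm d u1 p1 j lam with hN1
  rcases eq_or_ne N1 ⊤ with hT | hT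
  · rw [hT, ENNReal.mul_top (by
      apply ne_of_gt
      exact ENNReal.rpow_pos (by norm_num) (by norm_num))]
    exact le_top
  rcases eq_or_ne N1 0 with h0 | h0
  · have hz : ∀ m, inUnitCube d j m → ((‖lam m‖₊ : ℝ≥0∞)) = 0 := fun m hm =>
      le_antisymm (h0 ▸ coeff_le_mNorm d j u1 p1 hp1 lam m hm) zero_le
    have hzero : mNorm d u2 p2 j lam = 0 := by
      rw [mNorm]
      apply le_antisymm _ zero_le
      apply iSup_le
      rintro ⟨⟨ν, k⟩, hν, hk⟩
      simp only
      have hsum : (∑' m : {m : Fin d → ℤ // cubeSub d j ν m k},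
          ((‖lam m.1‖₊ : ℝ≥0∞)) ^ p2) = 0 := by
        rw [ENNReal.tsum_eq_zero]
        intro m
        rw [hz m.1 (cubeSub_unitCube hν hk m.2), ENNReal.zero_rpow_of_pos hp2]
      rw [hsum, ENNReal.zero_rpow_of_pos (by positivity), mul_zero]
    rw [hzero]
    exact zero_le
  -- main case
  rw [mNorm]
  apply iSup_le
  rintro ⟨⟨ν, k⟩, hν, hk⟩
  simp only
  set S1 := ∑' m : {m : Fin d → ℤ // cubeSub d j ν m k}, ((‖lam m.1‖₊ : ℝ≥0∞)) ^ p1 with hS1def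
  set S2 := ∑' m : {m : Fin d → ℤ // cubeSub d j ν m k}, ((‖lam m.1‖₊ : ℝ≥0∞)) ^ p2 with hS2def
  set E1 := (d : ℝ) * ((j : ℝ) - (ν : ℝ)) * (1 / u1 - 1 / p1) with hE1
  have hsup1 : (2 : ℝ≥0∞) ^ E1 * S1 ^ (1 / p1) ≤ N1 := by
    rw [hN1, mNorm]
    exact le_iSup (fun νk : {νk : ℕ × (Fin d → ℤ) // νk.1 ≤ j ∧ inUnitCube d νk.1 νk.2} =>
      (2 : ℝ≥0∞) ^ ((d : ℝ) * ((j : ℝ) - (νk.1.1 : ℝ)) * (1 / u1 - 1 / p1)) *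
        (∑' m : {m : Fin d → ℤ // cubeSub d j νk.1.1 m νk.1.2},
          ((‖lam m.1‖₊ : ℝ≥0∞)) ^ p1) ^ (1 / p1)) ⟨(ν, k), hν, hk⟩
  have hS1' : S1 ^ (1 / p1) ≤ (2 : ℝ≥0∞) ^ (-E1) * N1 := by
    have h := mul_le_mul_right hsup1 ((2 : ℝ≥0∞) ^ (-E1))
    rwa [← mul_assoc, ← ENNReal.rpow_add _ _ (by norm_num) (by norm_num),
      neg_add_cancel, ENNReal.rpow_zero, one_mul] at h
  have hS1'' : S1 ≤ (2 : ℝ≥0∞) ^ (-E1 * p1) * N1 ^ p1 := by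
    have h := ENNReal.rpow_le_rpow hS1' hp1.le
    rwa [← ENNReal.rpow_mul S1, one_div_mul_cancel hp1.ne', ENNReal.rpow_one,
      ENNReal.mul_rpow_of_nonneg _ _ hp1.le, ← ENNReal.rpow_mul] at h
  have hstep : ∀ m : {m : Fin d → ℤ // cubeSub d j ν m k},
      ((‖lam m.1‖₊ : ℝ≥0∞)) ^ p2 ≤ N1 ^ (p2 - p1) * ((‖lam m.1‖₊ : ℝ≥0∞)) ^ p1 := by
    intro m
    rcases eq_or_ne ((‖lam m.1‖₊ : ℝ≥0∞)) 0 with hzz | hzz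
    · rw [hzz, ENNReal.zero_rpow_of_pos hp2]
      exact zero_le
    · have hne : ((‖lam m.1‖₊ : ℝ≥0∞)) ≠ ⊤ := ENNReal.coe_ne_top
      have heq : ((‖lam m.1‖₊ : ℝ≥0∞)) ^ p2
          = ((‖lam m.1‖₊ : ℝ≥0∞)) ^ (p2 - p1) * ((‖lam m.1‖₊ : ℝ≥0∞)) ^ p1 := by
        rw [← ENNReal.rpow_add _ _ hzz hne]
        congr 1
        ring
      rw [heq]
      apply mul_le_mul_left
      exact ENNReal.rpow_le_rpow
        (coeff_le_mNorm d j u1 p1 hp1 lam m.1 (cubeSub_unitCube hν hk m.2)) (by linarith)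
  have hS2 : S2 ≤ N1 ^ (p2 - p1) * S1 := by
    rw [hS2def, hS1def, ← ENNReal.tsum_mul_left]
    exact ENNReal.tsum_le_tsum hstep
  have hS2' : S2 ≤ (2 : ℝ≥0∞) ^ (-E1 * p1) * N1 ^ p2 := by
    calc S2 ≤ N1 ^ (p2 - p1) * S1 := hS2
      _ ≤ N1 ^ (p2 - p1) * ((2 : ℝ≥0∞) ^ (-E1 * p1) * N1 ^ p1) := mul_le_mul_right hS1'' _
      _ = (2 : ℝ≥0∞) ^ (-E1 * p1) * (N1 ^ (p2 - p1) * N1 ^ p1) := by ring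
      _ = (2 : ℝ≥0∞) ^ (-E1 * p1) * N1 ^ p2 := by
          rw [← ENNReal.rpow_add _ _ h0 hT]
          congr 2
          ring
  have hS2'' : S2 ^ (1 / p2) ≤ (2 : ℝ≥0∞) ^ (-E1 * p1 * (1 / p2)) * N1 := by
    have h := ENNReal.rpow_le_rpow hS2' (by positivity : (0 : ℝ) ≤ 1 / p2)
    rwa [ENNReal.mul_rpow_of_nonneg _ _ (by positivity : (0 : ℝ) ≤ 1 / p2),
      ← ENNReal.rpow_mul, ← ENNReal.rpow_mul, mul_one_div_cancel hp2.ne',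
      ENNReal.rpow_one] at h
  calc (2 : ℝ≥0∞) ^ ((d : ℝ) * ((j : ℝ) - (ν : ℝ)) * (1 / u2 - 1 / p2)) * S2 ^ (1 / p2)
      ≤ (2 : ℝ≥0∞) ^ ((d : ℝ) * ((j : ℝ) - (ν : ℝ)) * (1 / u2 - 1 / p2)) *
          ((2 : ℝ≥0∞) ^ (-E1 * p1 * (1 / p2)) * N1) := mul_le_mul_right hS2'' _
    _ = (2 : ℝ≥0∞) ^ ((d : ℝ) * ((j : ℝ) - (ν : ℝ)) * (1 / u2 - 1 / p2)
          + -E1 * p1 * (1 / p2)) * N1 := by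
        rw [← mul_assoc, ← ENNReal.rpow_add _ _ (by norm_num) (by norm_num)]
    _ ≤ (2 : ℝ≥0∞) ^ (((j : ℝ) * d) * (1 / u2 - p1 / (u1 * p2))) * N1 := by
        apply mul_le_mul_left
        apply ENNReal.rpow_le_rpow_of_exponent_le one_le_two
        have hey : (d : ℝ) * ((j : ℝ) - (ν : ℝ)) * (1 / u2 - 1 / p2) + -E1 * p1 * (1 / p2)
            = ((d : ℝ) * ((j : ℝ) - (ν : ℝ))) * (1 / u2 - p1 / (u1 * p2)) := by
          rw [hE1]
          field_simp
          ring
        rw [hey]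
        have hνj : (0 : ℝ) ≤ (ν : ℝ) := Nat.cast_nonneg ν
        have hjj : (j : ℝ) - (ν : ℝ) ≤ (j : ℝ) := by linarith
        have hd0 : (0 : ℝ) ≤ (d : ℝ) := Nat.cast_nonneg d
        have hjν0 : (0 : ℝ) ≤ (j : ℝ) - (ν : ℝ) := by
          have : (ν : ℝ) ≤ (j : ℝ) := Nat.cast_le.2 hν
          linarith
        nlinarith [mul_nonneg (mul_nonneg hd0 hνj) hγ.le]

end Aux

theorem stmt8 (d : ℕ) (hd : 1 ≤ d) (u1 p1 u2 p2 : ℝ)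
    (hp1 : 0 < p1) (hp1u1 : p1 ≤ u1) (hp2 : 0 < p2) (hp2u2 : p2 ≤ u2)
    (h1 : p1 < p2) (h2 : p2 / u2 > p1 / u1) :
    ∃ c : ℝ, 0 < c ∧ c ≤ 1 ∧ ∀ j : ℕ,
      ENNReal.ofReal c * (2 : ℝ≥0∞) ^ (((j : ℝ) * d) * (1 / u2 - p1 / (u1 * p2))) ≤
          opNorm (mNorm d u1 p1 j) (mNorm d u2 p2 j) ∧
        opNorm (mNorm d u1 p1 j) (mNorm d u2 p2 j) ≤
          (2 : ℝ≥0∞) ^ (((j : ℝ) * d) * (1 / u2 - p1 / (u1 * p2))) := by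
  have hu1 : 0 < u1 := lt_of_lt_of_le hp1 hp1u1
  have hu2 : 0 < u2 := lt_of_lt_of_le hp2 hp2u2
  have h2' : p1 / u1 < p2 / u2 := h2
  refine ⟨(2 : ℝ) ^ (-(d : ℝ) / p2), Real.rpow_pos_of_pos two_pos _,
    Real.rpow_le_one_of_one_le_of_nonpos one_le_two
      (div_nonpos_of_nonpos_of_nonneg (neg_nonpos.2 (Nat.cast_nonneg d)) hp2.le),
    fun j => ⟨?_, ?_⟩⟩
  · -- lower bound
    set a := Nat.ceil ((j : ℝ) * (p1 / u1)) with hadef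
    have ha1 : (j : ℝ) * (p1 / u1) ≤ a := Nat.le_ceil _
    have ha2 : (a : ℝ) ≤ (j : ℝ) * (p1 / u1) + 1 :=
      (Nat.ceil_lt_add_one (by positivity)).le
    have haj : a ≤ j := by
      rw [hadef]
      apply Nat.ceil_le.2
      have hle : p1 / u1 ≤ 1 := (div_le_one hu1).2 hp1u1
      calc (j : ℝ) * (p1 / u1) ≤ (j : ℝ) * 1 :=
            mul_le_mul_of_nonneg_left hle (Nat.cast_nonneg j)
        _ = (j : ℝ) := mul_one _
    apply le_sInf
    intro C hC
    have hCb : mNorm d u2 p2 j (lamA d j a) ≤ C := by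
      refine le_trans (hC (lamA d j a)) ?_
      calc C * mNorm d u1 p1 j (lamA d j a) ≤ C * 1 :=
            mul_le_mul_right (mNorm_lamA_le_one d j a u1 p1 hp1 hp1u1 ha1) C
        _ = C := mul_one C
    refine le_trans ?_ (le_trans (le_mNorm_lamA d j a u2 p2 hp2 haj) hCb)
    have hofReal : ENNReal.ofReal ((2 : ℝ) ^ (-(d : ℝ) / p2))
        = (2 : ℝ≥0∞) ^ (-(d : ℝ) / p2) := by
      rw [← ENNReal.ofReal_rpow_of_pos two_pos]
      norm_num
    rw [hofReal, ← ENNReal.rpow_add _ _ (by norm_num) (by norm_num)]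
    apply ENNReal.rpow_le_rpow_of_exponent_le one_le_two
    have key : (a : ℝ) * ((d : ℝ) / p2) ≤ ((j : ℝ) * (p1 / u1) + 1) * ((d : ℝ) / p2) :=
      mul_le_mul_of_nonneg_right ha2 (by positivity)
    have hcast : (((j - a) * d : ℕ) : ℝ) = ((j : ℝ) - (a : ℝ)) * (d : ℝ) := by
      push_cast [Nat.cast_sub haj]
      ring
    rw [hcast]
    have hu1' : u1 ≠ 0 := hu1.ne'
    have hu2' : u2 ≠ 0 := hu2.ne'
    have hp2' : p2 ≠ 0 := hp2.ne'
    have hexpand1 : (a : ℝ) * ((d : ℝ) / p2) = (a : ℝ) * (d : ℝ) * (1 / p2) := by ring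
    have hexpand2 : ((j : ℝ) * (p1 / u1) + 1) * ((d : ℝ) / p2)
        = (j : ℝ) * (d : ℝ) * (p1 / (u1 * p2)) + (d : ℝ) * (1 / p2) := by
      field_simp
    rw [hexpand1, hexpand2] at key
    have hdiv : -(d : ℝ) / p2 = -((d : ℝ) * (1 / p2)) := by ring
    have h1u2 : (d : ℝ) * ((j : ℝ) - ((0 : ℕ) : ℝ)) * (1 / u2 - 1 / p2)
        = (j : ℝ) * (d : ℝ) * (1 / u2) - (j : ℝ) * (d : ℝ) * (1 / p2) := by
      push_cast
      ring
    have hlhs : (j : ℝ) * (d : ℝ) * (1 / u2 - p1 / (u1 * p2))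
        = (j : ℝ) * (d : ℝ) * (1 / u2) - (j : ℝ) * (d : ℝ) * (p1 / (u1 * p2)) := by ring
    have hrhs : ((j : ℝ) - (a : ℝ)) * (d : ℝ) * (1 / p2)
        = (j : ℝ) * (d : ℝ) * (1 / p2) - (a : ℝ) * (d : ℝ) * (1 / p2) := by ring
    rw [hdiv, h1u2, hlhs, hrhs]
    linarith [key]
  · -- upper bound
    apply sInf_le
    intro x
    exact mNorm_le_mNorm d j u1 p1 u2 p2 hp1 hp1u1 hp2 hp2u2 h1 h2' x
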